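/- arXiv:0908.0096 — 5 statements merged into one kernel-verified Lean document; each statement's English description precedes it below -/
import Mathlib

section
/- Let A be a commutative ring, B a commutative A-algebra, F a finitely presented B-module, and G a B-module which, as an A-module, is finitely generated and projective. Then there exist a finitely presented A-module N and a B-module homomorphism χ : F → G ⊗_A N such that for every A-module M the map Hom_A(N, M) → Hom_B(F, G ⊗_A M) sending g to (id_G ⊗ g) ∘ χ is bijective. In other words, the functor M ↦ Hom_B(F, G ⊗_A M) on A-modules is corepresented by the finitely presented A-module N. -/
open TensorProduct

universe u

section DualB

/-- Type synonym for the `A`-dual of `G`, carrying a `B`-module structure via the domain. -/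
def DualB (A : Type u) (_B : Type u) (G : Type u) [CommRing A] [AddCommGroup G]
    [Module A G] : Type u := G →ₗ[A] A

variable (A B G : Type u) [CommRing A] [CommRing B] [Algebra A B]
  [AddCommGroup G] [Module A G] [Module B G] [IsScalarTower A B G]

instance : AddCommGroup (DualB A B G) := inferInstanceAs (AddCommGroup (G →ₗ[A] A))
instance : Module A (DualB A B G) := inferInstanceAs (Module A (G →ₗ[A] A))

/-- The identity equivalence between `DualB A B G` and `G →ₗ[A] A`. -/
def DualB.linE : DualB A B G ≃ₗ[A] (G →ₗ[A] A) :=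
  { toFun := fun d => d, invFun := fun d => d,
    map_add' := fun _ _ => rfl, map_smul' := fun _ _ => rfl,
    left_inv := fun _ => rfl, right_inv := fun _ => rfl }

variable {A B G}

noncomputable instance : SMul B (DualB A B G) :=
  ⟨fun b d => (DualB.linE A B G).symm
    (((DualB.linE A B G) d).comp (b • (LinearMap.id : G →ₗ[A] G)))⟩

lemma DualB.linE_smulB (b : B) (d : DualB A B G) (g : G) :
    DualB.linE A B G (b • d) g = DualB.linE A B G d (b • g) := rfl

noncomputable instance : Module B (DualB A B G) where
  one_smul d := by
    apply (DualB.linE A B G).injective; ext g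
    simp [DualB.linE_smulB]
  mul_smul b b' d := by
    apply (DualB.linE A B G).injective; ext g
    simp [DualB.linE_smulB, mul_smul, mul_comm b b']
  smul_zero b := by
    apply (DualB.linE A B G).injective; ext g
    simp [DualB.linE_smulB]
  smul_add b d d' := by
    apply (DualB.linE A B G).injective; ext g
    simp [DualB.linE_smulB]
  add_smul b b' d := by
    apply (DualB.linE A B G).injective; ext g
    simp [DualB.linE_smulB, add_smul]
  zero_smul d := by
    apply (DualB.linE A B G).injective; ext g
    simp [DualB.linE_smulB]

instance : SMulCommClass B A (DualB A B G) :=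
  ⟨fun b a d => by
    apply (DualB.linE A B G).injective; ext g
    simp [DualB.linE_smulB]⟩

instance : SMulCommClass A B (DualB A B G) := SMulCommClass.symm _ _ _

instance : IsScalarTower A B (DualB A B G) :=
  ⟨fun a b d => by
    apply (DualB.linE A B G).injective; ext g
    simp [DualB.linE_smulB, smul_assoc]⟩

noncomputable instance [Module.Finite A G] [Module.Projective A G] :
    Module.Finite A (DualB A B G) :=
  Module.Finite.equiv ((DualB.linE A B G).symm :
    (Module.Dual A G) ≃ₗ[A] DualB A B G)

noncomputable instance [Module.Finite A G] [Module.Projective A G] :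
    Module.Projective A (DualB A B G) :=
  Module.Projective.of_equiv ((DualB.linE A B G).symm :
    (Module.Dual A G) ≃ₗ[A] DualB A B G)

end DualB

section DualBasis

variable {A : Type u} [CommRing A]
variable {G : Type u} [AddCommGroup G] [Module A G]
variable {r : ℕ} (π : (Fin r → A) →ₗ[A] G) (s : G →ₗ[A] (Fin r → A))

/-- The elements of a "dual basis family" for a finitely generated projective module. -/
noncomputable def dG (i : Fin r) : G := π (Pi.single i 1)

/-- The functionals of a "dual basis family". -/
noncomputable def dD (i : Fin r) : G →ₗ[A] A := (LinearMap.proj i).comp s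

lemma dual_basis_eval (hc : π.comp s = LinearMap.id) (g : G) :
    ∑ i, dD s i g • dG π i = g := by
  have h1 : ∑ i, dD s i g • dG π i
      = π (∑ i, (s g i) • (Pi.single i (1:A) : Fin r → A)) := by
    simp [dD, dG, map_sum]
  rw [h1]
  have h2 : (∑ i, (s g i) • (Pi.single i (1:A) : Fin r → A)) = s g := by
    ext j
    simp [Pi.single_apply, Finset.sum_apply]
  rw [h2, ← LinearMap.comp_apply, hc, LinearMap.id_apply]

lemma dual_expand (hc : π.comp s = LinearMap.id) (d : G →ₗ[A] A) :
    ∑ i, d (dG π i) • dD s i = d := by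
  ext g
  have h := dual_basis_eval π s hc g
  calc (∑ i, d (dG π i) • dD s i) g = d (∑ i, dD s i g • dG π i) := by
        simp [map_sum, LinearMap.sum_apply, mul_comm, smul_eq_mul]
    _ = d g := by rw [h]

end DualBasis

lemma pi_projective {A : Type u} [CommRing A] {D : Type u} [AddCommGroup D] [Module A D]
    [Module.Projective A D] (k : ℕ) : Module.Projective A (Fin k → D) := by
  haveI : Module.Projective A (DirectSum (Fin k) (fun _ => D)) :=
    inferInstanceAs (Module.Projective A (Π₀ (_ : Fin k), D))
  exact Module.Projective.of_equiv (DirectSum.linearEquivFunOnFintype A (Fin k) (fun _ => D))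

section FP

variable (A B : Type u) [CommRing A] [CommRing B] [Algebra A B]
variable (F : Type u) [AddCommGroup F] [Module B F] [Module.FinitePresentation B F]
variable (D : Type u) [AddCommGroup D] [Module A D] [Module B D] [IsScalarTower A B D]
  [SMulCommClass B A D] [Module.Finite A D] [Module.Projective A D]

lemma tensor_fp : Module.FinitePresentation A (D ⊗[B] F) := by
  classical
  have E : ∀ k : ℕ, ((D ⊗[B] (Fin k → B)) ≃ₗ[A] (Fin k → D)) := fun k =>
    ((TensorProduct.piRight B B D (fun _ : Fin k => B)).trans
      (LinearEquiv.piCongrRight (fun _ => TensorProduct.rid B D))).restrictScalars A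
  have hfinD : ∀ k : ℕ, Module.Finite A (D ⊗[B] (Fin k → B)) := fun k =>
    Module.Finite.equiv (E k).symm
  have hprojD : ∀ k : ℕ, Module.Projective A (D ⊗[B] (Fin k → B)) := fun k => by
    haveI := pi_projective (A := A) (D := D) k
    exact Module.Projective.of_equiv (E k).symm
  obtain ⟨n, π₁, hπ₁⟩ := Module.Finite.exists_fin' B F
  have hker : (LinearMap.ker π₁).FG := Module.FinitePresentation.fg_ker π₁ hπ₁
  haveI : Module.Finite B (LinearMap.ker π₁) := Module.Finite.iff_fg.mpr hker
  obtain ⟨m, β, hβ⟩ := Module.Finite.exists_fin' B (LinearMap.ker π₁)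
  set q := LinearMap.lTensor D π₁ with hqdef
  have hq : Function.Surjective q := LinearMap.lTensor_surjective D hπ₁
  set γ := LinearMap.lTensor D ((LinearMap.ker π₁).subtype ∘ₗ β) with hγ
  have hqk : LinearMap.ker q = LinearMap.range γ := by
    have hex : Function.Exact (LinearMap.lTensor D (LinearMap.ker π₁).subtype) q :=
      lTensor_exact D (π₁.exact_subtype_ker_map) hπ₁
    rw [LinearMap.exact_iff.mp hex, hγ, LinearMap.lTensor_comp]
    exact (LinearMap.range_comp_of_range_eq_top _
      (LinearMap.range_eq_top.mpr (LinearMap.lTensor_surjective D hβ))).symm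
  haveI := hfinD n
  haveI := hprojD n
  haveI : Module.FinitePresentation A (D ⊗[B] (Fin n → B)) :=
    Module.finitePresentation_of_projective A _
  apply Module.finitePresentation_of_surjective (q.restrictScalars A) hq
  have h1 : LinearMap.ker (q.restrictScalars A) =
      Submodule.restrictScalars A (LinearMap.ker q) := by
    ext x; rfl
  rw [h1, hqk]
  have h2 : Submodule.restrictScalars A (LinearMap.range γ)
      = LinearMap.range (γ.restrictScalars A) := by
    ext x; rfl
  rw [h2, ← Submodule.map_top]
  haveI := hfinD m
  exact Submodule.FG.map _ Module.Finite.fg_top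

end FP
section MainAux

variable (A B G : Type u) [CommRing A] [CommRing B] [Algebra A B]
  [AddCommGroup G] [Module A G] [Module B G] [IsScalarTower A B G]
variable {r : ℕ} (π : (Fin r → A) →ₗ[A] G) (s : G →ₗ[A] (Fin r → A))

/-- The dual family, as elements of `DualB`. -/
noncomputable def dDB (i : Fin r) : DualB A B G := (DualB.linE A B G).symm (dD s i)

@[simp] lemma linE_dDB (i : Fin r) : DualB.linE A B G (dDB A B G s i) = dD s i :=
  (DualB.linE A B G).apply_symm_apply _

lemma dDB_expand (hc : π.comp s = LinearMap.id) (d : DualB A B G) :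
    ∑ i, DualB.linE A B G d (dG π i) • dDB A B G s i = d := by
  apply (DualB.linE A B G).injective
  rw [map_sum]
  simp only [map_smul, linE_dDB]
  exact dual_expand π s hc _

lemma smul_dDB (hc : π.comp s = LinearMap.id) (b : B) (j : Fin r) :
    ∑ i, dD s j (b • dG π i) • dDB A B G s i = b • dDB A B G s j := by
  apply (DualB.linE A B G).injective
  rw [map_sum]
  simp only [map_smul, linE_dDB]
  have e : ∀ g : G, dD s j (b • g) = DualB.linE A B G (b • dDB A B G s j) g := by
    intro g
    rw [DualB.linE_smulB, linE_dDB]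
  calc ∑ i, dD s j (b • dG π i) • dD s i
      = ∑ i, (DualB.linE A B G (b • dDB A B G s j)) (dG π i) • dD s i :=
        Finset.sum_congr rfl fun i _ => by rw [← e]
    _ = DualB.linE A B G (b • dDB A B G s j) := dual_expand π s hc _

/-- The contraction map `G ⊗[A] M → M` induced by an element of the dual. -/
noncomputable def kontr (M : Type u) [AddCommGroup M] [Module A M] :
    DualB A B G →ₗ[A] (G ⊗[A] M →ₗ[A] M) where
  toFun d := TensorProduct.lift ((LinearMap.lsmul A M).comp (DualB.linE A B G d))
  map_add' d d' := by
    apply TensorProduct.ext'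
    intro g m
    simp [add_smul]
  map_smul' a d := by
    apply TensorProduct.ext'
    intro g m
    simp [mul_smul]

@[simp] lemma kontr_tmul (M : Type u) [AddCommGroup M] [Module A M]
    (d : DualB A B G) (g : G) (m : M) :
    kontr A B G M d (g ⊗ₜ[A] m) = DualB.linE A B G d g • m := by
  simp [kontr]

lemma kontr_smulB (M : Type u) [AddCommGroup M] [Module A M]
    (b : B) (d : DualB A B G) (z : G ⊗[A] M) :
    kontr A B G M (b • d) z = kontr A B G M d (b • z) := by
  induction z using TensorProduct.induction_on with
  | zero => simp
  | tmul g m =>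
      rw [TensorProduct.smul_tmul', kontr_tmul, kontr_tmul, DualB.linE_smulB]
  | add x y hx hy => rw [map_add, smul_add, map_add, hx, hy]

lemma kontr_sum_eval (M : Type u) [AddCommGroup M] [Module A M]
    (hc : π.comp s = LinearMap.id) (z : G ⊗[A] M) :
    ∑ i, dG π i ⊗ₜ[A] (kontr A B G M (dDB A B G s i) z) = z := by
  induction z using TensorProduct.induction_on with
  | zero => simp
  | tmul g m =>
      have h1 : ∀ i : Fin r, dG π i ⊗ₜ[A] (kontr A B G M (dDB A B G s i) (g ⊗ₜ[A] m))
          = (dD s i g • dG π i) ⊗ₜ[A] m := by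
        intro i
        rw [kontr_tmul, linE_dDB, TensorProduct.tmul_smul, TensorProduct.smul_tmul']
      rw [Finset.sum_congr rfl fun i _ => h1 i, ← TensorProduct.sum_tmul,
        dual_basis_eval π s hc]
  | add x y hx hy =>
      simp only [map_add, TensorProduct.tmul_add, Finset.sum_add_distrib, hx, hy]

end MainAux
section Chi

variable (A B G F : Type u) [CommRing A] [CommRing B] [Algebra A B]
  [AddCommGroup G] [Module A G] [Module B G] [IsScalarTower A B G]
  [AddCommGroup F] [Module B F]
variable {r : ℕ} (π : (Fin r → A) →ₗ[A] G) (s : G →ₗ[A] (Fin r → A))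

lemma chi_swap (hc : π.comp s = LinearMap.id) (b : B) (f : F) :
    ∑ i, (b • dG π i) ⊗ₜ[A] (dDB A B G s i ⊗ₜ[B] f)
      = ∑ i, dG π i ⊗ₜ[A] ((b • dDB A B G s i) ⊗ₜ[B] f) := by
  have step1 : ∀ i : Fin r, (b • dG π i) ⊗ₜ[A] (dDB A B G s i ⊗ₜ[B] f)
      = ∑ j, dG π j ⊗ₜ[A] ((dD s j (b • dG π i) • dDB A B G s i) ⊗ₜ[B] f) := by
    intro i
    conv_lhs => rw [← dual_basis_eval π s hc (b • dG π i)]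
    rw [TensorProduct.sum_tmul]
    refine Finset.sum_congr rfl fun j _ => ?_
    rw [TensorProduct.smul_tmul, TensorProduct.smul_tmul']
  rw [Finset.sum_congr rfl fun i _ => step1 i, Finset.sum_comm]
  refine Finset.sum_congr rfl fun j _ => ?_
  rw [← TensorProduct.tmul_sum, ← TensorProduct.sum_tmul, smul_dDB A B G π s hc b j]

/-- The universal homomorphism `χ : F → G ⊗[A] (DualB ⊗[B] F)`. -/
noncomputable def chi (hc : π.comp s = LinearMap.id) :
    F →ₗ[B] G ⊗[A] (DualB A B G ⊗[B] F) where
  toFun f := ∑ i, dG π i ⊗ₜ[A] (dDB A B G s i ⊗ₜ[B] f)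
  map_add' f f' := by simp [TensorProduct.tmul_add, Finset.sum_add_distrib]
  map_smul' b f := by
    simp only [RingHom.id_apply]
    have h1 : ∀ i : Fin r, dG π i ⊗ₜ[A] (dDB A B G s i ⊗ₜ[B] (b • f))
        = dG π i ⊗ₜ[A] ((b • dDB A B G s i) ⊗ₜ[B] f) := by
      intro i
      rw [TensorProduct.tmul_smul, TensorProduct.smul_tmul']
    rw [Finset.sum_congr rfl fun i _ => h1 i, ← chi_swap A B G F π s hc b f,
      Finset.smul_sum]
    exact Finset.sum_congr rfl fun i _ => (TensorProduct.smul_tmul' b _ _).symm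

@[simp] lemma chi_apply (hc : π.comp s = LinearMap.id) (f : F) :
    chi A B G F π s hc f = ∑ i, dG π i ⊗ₜ[A] (dDB A B G s i ⊗ₜ[B] f) := rfl

variable (M : Type u) [AddCommGroup M] [Module A M]

/-- The underlying additive map of the inverse of `g ↦ (1 ⊗ g) ∘ χ`. -/
noncomputable def psiAux (ψ : F →ₗ[B] G ⊗[A] M) : (DualB A B G ⊗[B] F) →+ M :=
  TensorProduct.liftAddHom
    (AddMonoidHom.mk' (fun d => AddMonoidHom.mk' (fun f => kontr A B G M d (ψ f))
        (fun f f' => by simp only [map_add]))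
      (fun d d' => AddMonoidHom.ext fun f => by
        simp only [AddMonoidHom.mk'_apply, AddMonoidHom.add_apply, map_add,
          LinearMap.add_apply]))
    (fun b d f => by
      simp only [AddMonoidHom.mk'_apply, map_smul, kontr_smulB])

lemma psiAux_tmul (ψ : F →ₗ[B] G ⊗[A] M) (d : DualB A B G) (f : F) :
    psiAux A B G F M ψ (d ⊗ₜ[B] f) = kontr A B G M d (ψ f) := by
  unfold psiAux
  exact TensorProduct.liftAddHom_tmul _ _ _ _

/-- The inverse of `g ↦ (1 ⊗ g) ∘ χ`. -/
noncomputable def psi (ψ : F →ₗ[B] G ⊗[A] M) : (DualB A B G ⊗[B] F) →ₗ[A] M where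
  toAddHom := (psiAux A B G F M ψ).toAddHom
  map_smul' := by
    intro a x
    simp only [RingHom.id_apply]
    induction x using TensorProduct.induction_on with
    | zero => simp
    | tmul d f =>
        show psiAux A B G F M ψ (a • d ⊗ₜ[B] f) = a • psiAux A B G F M ψ (d ⊗ₜ[B] f)
        rw [TensorProduct.smul_tmul', psiAux_tmul, psiAux_tmul, map_smul,
          LinearMap.smul_apply]
    | add x y hx hy =>
        show psiAux A B G F M ψ (a • (x + y)) = a • psiAux A B G F M ψ (x + y)
        rw [smul_add, map_add, map_add, smul_add]
        exact congrArg₂ (· + ·) hx hy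

@[simp] lemma psi_tmul (ψ : F →ₗ[B] G ⊗[A] M) (d : DualB A B G) (f : F) :
    psi A B G F M ψ (d ⊗ₜ[B] f) = kontr A B G M d (ψ f) :=
  psiAux_tmul A B G F M ψ d f

end Chi

/-- Let `A` be a commutative ring, `B` a commutative `A`-algebra, `F` a
finitely presented `B`-module, and `G` a `B`-module which, as an `A`-module, is finitely
generated and projective.  Then there exist a finitely presented `A`-module `N` and a
`B`-module homomorphism `χ : F → G ⊗[A] N` such that for every `A`-module `M` the map
`Hom_A(N, M) → Hom_B(F, G ⊗[A] M)`, `g ↦ (id_G ⊗ g) ∘ χ`, is bijective. -/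
theorem stmt0 (A : Type u) (B : Type u) [CommRing A] [CommRing B] [Algebra A B]
    (F : Type u) [AddCommGroup F] [Module B F] [Module.FinitePresentation B F]
    (G : Type u) [AddCommGroup G] [Module A G] [Module B G] [IsScalarTower A B G]
    [Module.Finite A G] [Module.Projective A G] :
    ∃ (N : Type u) (_ : AddCommGroup N) (_ : Module A N),
      Module.FinitePresentation A N ∧
      ∃ χ : F →ₗ[B] G ⊗[A] N,
        ∀ (M : Type u) [AddCommGroup M] [Module A M],
          Function.Bijective fun g : N →ₗ[A] M =>
            (TensorProduct.AlgebraTensorModule.map (LinearMap.id : G →ₗ[B] G) g).comp χ := by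
  classical
  obtain ⟨r, π, s, hπ, hs, hc⟩ := Module.Finite.exists_comp_eq_id_of_projective A G
  refine ⟨DualB A B G ⊗[B] F, inferInstance, inferInstance,
    tensor_fp A B F (DualB A B G), chi A B G F π s hc, ?_⟩
  intro M im1 im2
  rw [Function.bijective_iff_has_inverse]
  refine ⟨fun ψ => psi A B G F M ψ, ?_, ?_⟩
  · -- left inverse
    intro g
    apply LinearMap.ext
    intro x
    induction x using TensorProduct.induction_on with
    | zero => simp
    | tmul d f =>
        have h1 : (TensorProduct.AlgebraTensorModule.map (LinearMap.id : G →ₗ[B] G) g)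
              (chi A B G F π s hc f)
            = ∑ i, dG π i ⊗ₜ[A] (g (dDB A B G s i ⊗ₜ[B] f)) := by
          rw [chi_apply, map_sum]
          exact Finset.sum_congr rfl fun i _ => by
            rw [TensorProduct.AlgebraTensorModule.map_tmul, LinearMap.id_apply]
        show psi A B G F M
            ((TensorProduct.AlgebraTensorModule.map (LinearMap.id : G →ₗ[B] G) g).comp
              (chi A B G F π s hc)) (d ⊗ₜ[B] f) = g (d ⊗ₜ[B] f)
        rw [psi_tmul, LinearMap.comp_apply, h1, map_sum]
        have h2 : ∀ i : Fin r,
            kontr A B G M d (dG π i ⊗ₜ[A] (g (dDB A B G s i ⊗ₜ[B] f)))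
              = DualB.linE A B G d (dG π i) • g (dDB A B G s i ⊗ₜ[B] f) :=
          fun i => kontr_tmul A B G M d _ _
        rw [Finset.sum_congr rfl fun i _ => h2 i]
        have h3 : ∀ i : Fin r,
            DualB.linE A B G d (dG π i) • g (dDB A B G s i ⊗ₜ[B] f)
              = g ((DualB.linE A B G d (dG π i) • dDB A B G s i) ⊗ₜ[B] f) := by
          intro i
          rw [← map_smul, TensorProduct.smul_tmul']
        rw [Finset.sum_congr rfl fun i _ => h3 i, ← map_sum, ← TensorProduct.sum_tmul,
          dDB_expand A B G π s hc d]
    | add x y hx hy => rw [map_add, map_add, hx, hy]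
  · -- right inverse
    intro ψ
    apply LinearMap.ext
    intro f
    show (TensorProduct.AlgebraTensorModule.map (LinearMap.id : G →ₗ[B] G)
        (psi A B G F M ψ)) (chi A B G F π s hc f) = ψ f
    rw [chi_apply, map_sum]
    have h1 : ∀ i : Fin r,
        (TensorProduct.AlgebraTensorModule.map (LinearMap.id : G →ₗ[B] G)
            (psi A B G F M ψ)) (dG π i ⊗ₜ[A] (dDB A B G s i ⊗ₜ[B] f))
          = dG π i ⊗ₜ[A] (kontr A B G M (dDB A B G s i) (ψ f)) := by
      intro i
      rw [TensorProduct.AlgebraTensorModule.map_tmul, LinearMap.id_apply, psi_tmul]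
    rw [Finset.sum_congr rfl fun i _ => h1 i, kontr_sum_eval A B G π s M hc (ψ f)]
end

section
/- Let A be a commutative Artinian local ring with residue field κ. Let F and G be flat A-modules and u : F → G an A-linear map such that the induced map u ⊗ id_κ : F ⊗_A κ → G ⊗_A κ is injective. Then u is injective and the cokernel of u is a flat A-module. -/
open Submodule TensorProduct Function

section helpers
variable {A : Type*} [CommRing A]

variable {A : Type*} [CommRing A]


variable {A : Type*} [CommRing A]

/-- Nakayama for nilpotent ideals, no finiteness. -/
lemma span_sup_smul_eq_top {M : Type*} [AddCommGroup M] [Module A M]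
    {I : Ideal A} {n : ℕ} (hn : I ^ n = ⊥) (N : Submodule A M)
    (hN : N ⊔ I • ⊤ = ⊤) : N = ⊤ := by
  have key : ∀ k : ℕ, N ⊔ I ^ k • (⊤ : Submodule A M) = ⊤ := by
    intro k
    induction k with
    | zero => simp
    | succ k ih =>
      refine le_antisymm le_top ?_
      have h1 : I ^ k • (⊤ : Submodule A M) ≤ N ⊔ I ^ (k+1) • ⊤ := by
        conv_lhs => rw [← hN]
        rw [Submodule.smul_sup]
        refine sup_le (le_trans Submodule.smul_le_right le_sup_left) ?_
        rw [← mul_smul, ← pow_succ]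
        exact le_sup_right
      calc (⊤ : Submodule A M) = N ⊔ I ^ k • ⊤ := ih.symm
        _ ≤ N ⊔ (N ⊔ I ^ (k+1) • ⊤) := sup_le_sup_left h1 N
        _ = N ⊔ I ^ (k+1) • ⊤ := by rw [← sup_assoc, sup_idem]
  have := key n
  rwa [hn, Submodule.bot_smul, sup_bot_eq] at this


lemma linearIndependent_of_flat_aux {M ι : Type*} [AddCommGroup M] [Module A M]
    [Module.Flat A M] {I : Ideal A} {n : ℕ} (hn : I ^ n = ⊥)
    (x : ι → M) (f : ι → (M →ₗ[A] (A ⧸ I)))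
    (hf1 : ∀ i, f i (x i) = 1) (hf2 : ∀ i j, i ≠ j → f i (x j) = 0) :
    LinearIndependent A x := by
  classical
  rw [linearIndependent_iff']
  intro s g hg i hi
  suffices key : ∀ k : ℕ, ∀ j ∈ s, g j ∈ I ^ k by
    have := key n i hi
    rwa [hn, Submodule.mem_bot] at this
  intro k
  induction k with
  | zero => intro j _; simp [Ideal.one_eq_top]
  | succ k ih =>
    intro i hi
    set J : Ideal A := I ^ k with hJ
    set t : J ⊗[A] M := ∑ j ∈ s.attach, (⟨g j, ih j j.2⟩ : J) ⊗ₜ[A] x j with ht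
    have ht0 : t = 0 := by
      apply (Module.Flat.iff_rTensor_injective' (R := A) (M := M)).mp inferInstance J
      rw [map_zero, ht, map_sum]
      have e1 : ∀ j : {y // y ∈ s}, (LinearMap.rTensor M J.subtype)
          ((⟨g j, ih j j.2⟩ : J) ⊗ₜ[A] x j) = (1:A) ⊗ₜ[A] (g j • x j) := by
        intro j
        rw [LinearMap.rTensor_tmul]
        show (g j : A) ⊗ₜ[A] x j = _
        rw [← TensorProduct.smul_tmul, smul_eq_mul, mul_one]
      rw [Finset.sum_congr rfl (fun j _ => e1 j), ← TensorProduct.tmul_sum]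
      have : ∑ j ∈ s.attach, g j • x (j:ι) = 0 := by
        rw [Finset.sum_attach s (fun j => g j • x j)]; exact hg
      rw [this, tmul_zero]
    -- apply lTensor with f i
    have h2 : (LinearMap.lTensor J (f i)) t = 0 := by rw [ht0, map_zero]
    rw [ht, map_sum] at h2
    have e2 : ∀ j : {y // y ∈ s}, (LinearMap.lTensor J (f i))
        ((⟨g j, ih j j.2⟩ : J) ⊗ₜ[A] x j) = (⟨g j, ih j j.2⟩ : J) ⊗ₜ[A] (f i (x j)) :=
      fun j => LinearMap.lTensor_tmul _ _ _ _
    rw [Finset.sum_congr rfl (fun j _ => e2 j)] at h2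
    rw [Finset.sum_eq_single (⟨i, hi⟩ : {y // y ∈ s})] at h2
    · rw [hf1 i] at h2
      -- h2 : ⟨g i, _⟩ ⊗ₜ 1 = 0 in J ⊗ (A ⧸ I)
      have h3 : (TensorProduct.tensorQuotEquivQuotSMul J I).symm
          (Submodule.Quotient.mk (⟨g i, ih i hi⟩ : J)) = 0 := by
        rw [TensorProduct.tensorQuotEquivQuotSMul_symm_mk]
        exact h2
      have h4 : Submodule.Quotient.mk (p := I • (⊤ : Submodule A J)) (⟨g i, ih i hi⟩ : J) = 0 :=
        (LinearEquiv.map_eq_zero_iff _).mp h3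
      rw [Submodule.Quotient.mk_eq_zero] at h4
      rw [Submodule.mem_smul_top_iff] at h4
      rw [Ideal.smul_eq_mul, mul_comm, ← pow_succ] at h4
      exact h4
    · intro b _ hb
      have : f i (x b) = 0 := hf2 i b (fun he => hb (Subtype.ext he.symm))
      rw [this, tmul_zero]
    · intro hmem; exact absurd (Finset.mem_attach s ⟨i, hi⟩) hmem


lemma basis_of_flat_aux {M ι : Type*} [AddCommGroup M] [Module A M] [Module.Flat A M]
    {I : Ideal A} {n : ℕ} (hn : I ^ n = ⊥) (x : ι → M)
    (b : Module.Basis ι (A ⧸ I) (M ⧸ (I • ⊤ : Submodule A M)))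
    (hb : ∀ i, Submodule.Quotient.mk (x i) = b i) :
    LinearIndependent A x ∧ Submodule.span A (Set.range x) = ⊤ := by
  haveI : IsScalarTower A (A ⧸ I) (M ⧸ (I • ⊤ : Submodule A M)) :=
    Module.IsTorsionBySet.isScalarTower (Module.isTorsionBySet_quotient_ideal_smul M I)
  have hsur : Function.Surjective (algebraMap A (A ⧸ I)) := by
    rw [Ideal.Quotient.algebraMap_eq]; exact Ideal.Quotient.mk_surjective
  constructor
  · -- linear independence
    set f : ι → (M →ₗ[A] (A ⧸ I)) := fun i =>
      ((b.coord i).restrictScalars A).comp (Submodule.mkQ (I • ⊤ : Submodule A M)) with hfdef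
    have hf1 : ∀ i, f i (x i) = 1 := by
      intro i
      simp only [hfdef, LinearMap.comp_apply, Submodule.mkQ_apply, LinearMap.coe_restrictScalars,
        hb i, Module.Basis.coord_apply, Module.Basis.repr_self, Finsupp.single_eq_same]
    have hf2 : ∀ i j, i ≠ j → f i (x j) = 0 := by
      intro i j hij
      simp only [hfdef, LinearMap.comp_apply, Submodule.mkQ_apply, LinearMap.coe_restrictScalars,
        hb j, Module.Basis.coord_apply, Module.Basis.repr_self]
      exact Finsupp.single_eq_of_ne' (Ne.symm hij)
    exact linearIndependent_of_flat_aux hn x f hf1 hf2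
  · -- spanning
    apply span_sup_smul_eq_top hn
    rw [eq_top_iff]
    intro y _
    have hy : Submodule.Quotient.mk y ∈ Submodule.span (A ⧸ I)
        (Set.range fun i => Submodule.Quotient.mk (p := (I • ⊤ : Submodule A M)) (x i)) := by
      have hr : (Set.range fun i => Submodule.Quotient.mk (p := (I • ⊤ : Submodule A M)) (x i))
          = Set.range b := by
        have he : (fun i => Submodule.Quotient.mk (p := (I • ⊤ : Submodule A M)) (x i)) = ⇑b :=
          funext hb
        rw [he]
      rw [hr, b.span_eq]; trivial
    have hy' : Submodule.Quotient.mk y ∈ Submodule.span A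
        (Set.range fun i => Submodule.Quotient.mk (p := (I • ⊤ : Submodule A M)) (x i)) := by
      rw [← Submodule.restrictScalars_span A (A ⧸ I) hsur]
      exact hy
    have hr2 : (Set.range fun i => Submodule.Quotient.mk (p := (I • ⊤ : Submodule A M)) (x i))
        = (Submodule.mkQ (I • ⊤ : Submodule A M)) '' (Set.range x) := by
      rw [← Set.range_comp]; rfl
    rw [hr2, ← Submodule.map_span] at hy'
    obtain ⟨z, hz, hzy⟩ := hy'
    have hd : y - z ∈ (I • ⊤ : Submodule A M) := by
      rw [← Submodule.Quotient.eq]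
      exact hzy.symm ▸ rfl
    have : y = z + (y - z) := by abel
    rw [this]
    exact Submodule.add_mem_sup hz hd

lemma sumExtend_inl {K V ι : Type*} [Field K] [AddCommGroup V] [Module K V]
    {v : ι → V} (hs : LinearIndependent K v) (i : ι) :
    Module.Basis.sumExtend hs (Sum.inl i) = v i := by
  simp only [Module.Basis.sumExtend, Module.Basis.reindex_apply, Equiv.symm_symm]
  erw [Module.Basis.extend_apply_self]
  rfl

end helpers

section main

/-- Let `A` be a commutative Artinian local ring with residue field `κ`.
Let `F` and `G` be flat `A`-modules and `u : F → G` an `A`-linear map such that the induced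
map `u ⊗ id_κ : F ⊗[A] κ → G ⊗[A] κ` is injective.  Then `u` is injective and the cokernel
of `u` is a flat `A`-module. -/
theorem stmt3 (A : Type*) [CommRing A] [IsArtinianRing A] [IsLocalRing A]
    (F G : Type*) [AddCommGroup F] [Module A F] [AddCommGroup G] [Module A G]
    [Module.Flat A F] [Module.Flat A G] (u : F →ₗ[A] G)
    (h : Function.Injective (LinearMap.rTensor (IsLocalRing.ResidueField A) u)) :
    Function.Injective u ∧ Module.Flat A (G ⧸ LinearMap.range u) := by
  classical
  set m : Ideal A := IsLocalRing.maximalIdeal A with hm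
  obtain ⟨n, hn⟩ : ∃ n : ℕ, m ^ n = ⊥ := by
    have h1 := IsArtinianRing.isNilpotent_jacobson_bot (R := A)
    rw [IsLocalRing.jacobson_eq_maximalIdeal ⊥ bot_ne_top] at h1
    obtain ⟨n, hn⟩ := h1
    exact ⟨n, hn⟩
  -- Step 1: reduction mod m detects membership
  have hred : ∀ x : F, u x ∈ (m • ⊤ : Submodule A G) → x ∈ (m • ⊤ : Submodule A F) := by
    intro x hx
    have h2 : (u x) ⊗ₜ[A] (1 : IsLocalRing.ResidueField A) = 0 := by
      have e1 : (TensorProduct.tensorQuotEquivQuotSMul G m).symm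
          (Submodule.Quotient.mk (u x)) = (u x) ⊗ₜ[A] (1 : A ⧸ m) :=
        TensorProduct.tensorQuotEquivQuotSMul_symm_mk m (u x)
      have e2 : Submodule.Quotient.mk (p := (m • ⊤ : Submodule A G)) (u x) = 0 :=
        (Submodule.Quotient.mk_eq_zero _).mpr hx
      rw [e2, map_zero] at e1
      exact e1.symm
    have h3 : LinearMap.rTensor (IsLocalRing.ResidueField A) u
        (x ⊗ₜ[A] (1 : IsLocalRing.ResidueField A)) = 0 := by
      rw [LinearMap.rTensor_tmul]; exact h2
    have h4 : x ⊗ₜ[A] (1 : IsLocalRing.ResidueField A) = 0 := by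
      apply h; rw [h3, map_zero]
    have h5 : (TensorProduct.tensorQuotEquivQuotSMul F m).symm
        (Submodule.Quotient.mk (p := (m • ⊤ : Submodule A F)) x) = x ⊗ₜ[A] (1 : A ⧸ m) :=
      TensorProduct.tensorQuotEquivQuotSMul_symm_mk m x
    have h6 : Submodule.Quotient.mk (p := (m • ⊤ : Submodule A F)) x = 0 := by
      have := congrArg (TensorProduct.tensorQuotEquivQuotSMul F m) h5
      rw [LinearEquiv.apply_symm_apply] at this
      rw [this]
      have h4' : x ⊗ₜ[A] (1 : A ⧸ m) = 0 := h4
      rw [h4', map_zero]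
    exact (Submodule.Quotient.mk_eq_zero _).mp h6
  -- instances
  haveI : IsScalarTower A (A ⧸ m) (F ⧸ (m • ⊤ : Submodule A F)) :=
    Module.IsTorsionBySet.isScalarTower (Module.isTorsionBySet_quotient_ideal_smul F m)
  haveI : IsScalarTower A (A ⧸ m) (G ⧸ (m • ⊤ : Submodule A G)) :=
    Module.IsTorsionBySet.isScalarTower (Module.isTorsionBySet_quotient_ideal_smul G m)
  haveI : m.IsMaximal := by rw [hm]; infer_instance
  letI : Field (A ⧸ m) := Ideal.Quotient.field m
  letI : Algebra A (A ⧸ m) := Ideal.Quotient.algebra A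
  letI : IsScalarTower A (A ⧸ m) (A ⧸ m) := IsScalarTower.right
  have hsur : Function.Surjective (algebraMap A (A ⧸ m)) := by
    rw [Ideal.Quotient.algebraMap_eq]; exact Ideal.Quotient.mk_surjective
  -- Step 2: a basis of F
  set bQF := Module.Basis.ofVectorSpace (A ⧸ m) (F ⧸ (m • ⊤ : Submodule A F)) with hbQF
  set vF : Module.Basis.ofVectorSpaceIndex (A ⧸ m) (F ⧸ (m • ⊤ : Submodule A F)) → F :=
    fun i => (Submodule.Quotient.mk_surjective _ (bQF i)).choose with hvF
  have hvFspec : ∀ i, Submodule.Quotient.mk (vF i) = bQF i :=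
    fun i => (Submodule.Quotient.mk_surjective _ (bQF i)).choose_spec
  obtain ⟨liF, spanF⟩ := basis_of_flat_aux hn vF bQF hvFspec
  set bF : Module.Basis _ A F := Module.Basis.mk liF spanF.ge with hbF
  -- Step 3: the reduction of u, and extension of the image basis
  have hmapu : (m • ⊤ : Submodule A F) ≤ Submodule.comap u (m • ⊤ : Submodule A G) := by
    intro x hx
    rw [Submodule.mem_comap]
    have h1 : u x ∈ Submodule.map u (m • ⊤ : Submodule A F) := Submodule.mem_map_of_mem hx
    rw [Submodule.map_smul''] at h1
    exact Submodule.smul_mono le_rfl le_top h1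
  set ubar0 : (F ⧸ (m • ⊤ : Submodule A F)) →ₗ[A] (G ⧸ (m • ⊤ : Submodule A G)) :=
    Submodule.mapQ _ _ u hmapu with hubar0
  set ubar := LinearMap.extendScalarsOfSurjective hsur ubar0 with hubar
  have hubar_inj : Function.Injective ubar := by
    intro q1 q2 hq
    obtain ⟨x1, rfl⟩ := Submodule.Quotient.mk_surjective _ q1
    obtain ⟨x2, rfl⟩ := Submodule.Quotient.mk_surjective _ q2
    rw [← sub_eq_zero, ← Submodule.Quotient.mk_sub, Submodule.Quotient.mk_eq_zero]
    have : ubar (Submodule.Quotient.mk (x1 - x2)) = 0 := by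
      rw [Submodule.Quotient.mk_sub, map_sub, hq, sub_self]
    have h1 : Submodule.Quotient.mk (p := (m • ⊤ : Submodule A G)) (u (x1 - x2)) = 0 := by
      rw [← this]; rfl
    exact hred _ ((Submodule.Quotient.mk_eq_zero _).mp h1)
  have liQG : LinearIndependent (A ⧸ m) (⇑ubar ∘ ⇑bQF) :=
    bQF.linearIndependent.map' ubar (LinearMap.ker_eq_bot.mpr hubar_inj)
  set bQG := Module.Basis.sumExtend liQG with hbQG
  have hbQG_inl : ∀ i, bQG (Sum.inl i) = ubar (bQF i) := fun i => sumExtend_inl liQG i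
  -- Step 4: basis of G
  set y : _ ⊕ _ → G := Sum.elim (fun i => u (vF i))
    (fun j => (Submodule.Quotient.mk_surjective (m • ⊤ : Submodule A G)
      (bQG (Sum.inr j))).choose) with hy
  have hyspec : ∀ s, Submodule.Quotient.mk (y s) = bQG s := by
    intro s
    cases s with
    | inl i =>
      rw [hbQG_inl i, ← hvFspec i]
      show Submodule.Quotient.mk (u (vF i)) = ubar (Submodule.Quotient.mk (vF i))
      rfl
    | inr j =>
      exact (Submodule.Quotient.mk_surjective _ (bQG (Sum.inr j))).choose_spec
  obtain ⟨liG, spanG⟩ := basis_of_flat_aux hn y bQG hyspec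
  set bG : Module.Basis _ A G := Module.Basis.mk liG spanG.ge with hbG
  have hub : ∀ i, u (bF i) = bG (Sum.inl i) := by
    intro i
    rw [hbF, hbG, Module.Basis.mk_apply, Module.Basis.mk_apply]
    rfl
  -- the key linear map identity
  set L : _ →ₗ[A] _ := (bG.repr : G ≃ₗ[A] _).toLinearMap ∘ₗ u ∘ₗ
    ((bF.repr.symm : _ ≃ₗ[A] F).toLinearMap) with hL
  have hLeq : L = Finsupp.lmapDomain A A Sum.inl := by
    apply Finsupp.lhom_ext
    intro i a
    rw [hL]
    simp only [LinearMap.comp_apply, LinearEquiv.coe_toLinearMap]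
    rw [Module.Basis.repr_symm_single, map_smul, hub i, map_smul, Module.Basis.repr_self,
      Finsupp.lmapDomain_apply, Finsupp.mapDomain_single]
    rw [Finsupp.smul_single, smul_eq_mul, mul_one]
  have hL_apply : ∀ x : F, bG.repr (u x) = Finsupp.mapDomain Sum.inl (bF.repr x) := by
    intro x
    have : L (bF.repr x) = Finsupp.lmapDomain A A Sum.inl (bF.repr x) := by rw [hLeq]
    simpa only [hL, LinearMap.comp_apply, LinearEquiv.coe_toLinearMap,
      LinearEquiv.symm_apply_apply, Finsupp.lmapDomain_apply] using this
  constructor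
  · -- injectivity
    intro x1 x2 hx
    have h0 : u (x1 - x2) = 0 := by rw [map_sub, hx, sub_self]
    have h1 : bG.repr (u (x1 - x2)) = 0 := by rw [h0, map_zero]
    rw [hL_apply] at h1
    have h2 : bF.repr (x1 - x2) = 0 :=
      Finsupp.mapDomain_injective Sum.inl_injective (by rw [h1, Finsupp.mapDomain_zero])
    have h3 : x1 - x2 = 0 := by
      have := congrArg bF.repr.symm h2
      rwa [LinearEquiv.symm_apply_apply, map_zero] at this
    exact sub_eq_zero.mp h3
  · -- flatness of the cokernel
    set p : G →ₗ[A] _ := (Finsupp.lcomapDomain Sum.inr Sum.inr_injective) ∘ₗ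
      (bG.repr : G ≃ₗ[A] _).toLinearMap with hp
    have hp_apply : ∀ (g : G) j, p g j = bG.repr g (Sum.inr j) := fun g j => rfl
    have hpsurj : Function.Surjective p := by
      intro l
      refine ⟨bG.repr.symm (Finsupp.mapDomain Sum.inr l), ?_⟩
      ext j
      rw [hp_apply, LinearEquiv.apply_symm_apply,
        Finsupp.mapDomain_apply Sum.inr_injective]
    have hker : LinearMap.ker p = LinearMap.range u := by
      apply le_antisymm
      · intro g hg
        rw [LinearMap.mem_ker] at hg
        set c := Finsupp.lcomapDomain (M := A) (R := A) Sum.inl Sum.inl_injective (bG.repr g) with hc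
        refine ⟨bF.repr.symm c, ?_⟩
        apply bG.repr.injective
        rw [hL_apply, LinearEquiv.apply_symm_apply]
        ext s
        cases s with
        | inl i =>
          rw [Finsupp.mapDomain_apply Sum.inl_injective]
          rfl
        | inr j =>
          rw [Finsupp.mapDomain_notin_range _ _ (by rintro ⟨i, hi⟩; exact Sum.inl_ne_inr hi)]
          exact (DFunLike.congr_fun hg j).symm
      · rintro _ ⟨x, rfl⟩
        rw [LinearMap.mem_ker]
        ext j
        rw [hp_apply, hL_apply,
          Finsupp.mapDomain_notin_range _ _ (by rintro ⟨i, hi⟩; exact Sum.inl_ne_inr hi)]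
        rfl
    have e := p.quotKerEquivOfSurjective hpsurj
    rw [hker] at e
    exact Module.Flat.of_linearEquiv e

end main
end

section
/- Let A be a commutative ring, S a commutative A-algebra that is flat as an A-module, t ∈ S a nonzerodivisor such that S/tS is flat as an A-module, and I ⊆ S an ideal such that S/I is flat as an A-module. Then: (a) for every A-module M, multiplication by t on I ⊗_A M is injective; and (b) the A-module I/tI (equivalently, I ⊗_S S/tS) is flat over A. -/
open TensorProduct

universe u

/-- Auxiliary version of `lemA` with an abstract flat presentation. -/
private lemma lemA' {R : Type u} [CommRing R] {K F Q : Type u}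
    [AddCommGroup K] [AddCommGroup F] [AddCommGroup Q]
    [Module R K] [Module R F] [Module R Q] [Module.Flat R Q]
    {f : K →ₗ[R] F} {g : F →ₗ[R] Q} (hf : Function.Injective f)
    (hfg : Function.Exact f g) (hg : Function.Surjective g)
    {M P : Type u} [AddCommGroup M] [Module R M]
    [AddCommGroup P] [Module R P] [Module.Flat R P]
    (φ : P →ₗ[R] M) (hφ : Function.Surjective φ) :
    Function.Injective (f.rTensor M) := by
  rw [injective_iff_map_eq_zero]
  intro x hx
  obtain ⟨y, hy⟩ := LinearMap.lTensor_surjective K hφ x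
  have h1 : φ.lTensor F (f.rTensor P y) = 0 := by
    rw [← LinearMap.comp_apply, LinearMap.lTensor_comp_rTensor,
      ← LinearMap.rTensor_comp_lTensor, LinearMap.comp_apply, hy, hx]
  obtain ⟨z, hz⟩ := (lTensor_exact (R := R) (M := LinearMap.ker φ) (N := P) (P := M)
    (f := (LinearMap.ker φ).subtype) (g := φ) F (LinearMap.exact_subtype_ker_map φ) hφ _).mp h1
  have h2 : g.rTensor (LinearMap.ker φ) z = 0 := by
    have hinj : Function.Injective ((LinearMap.ker φ).subtype.lTensor Q) :=
      Module.Flat.lTensor_preserves_injective_linearMap (M := Q) _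
        (Submodule.injective_subtype (LinearMap.ker φ))
    apply hinj
    rw [map_zero, ← LinearMap.comp_apply, LinearMap.lTensor_comp_rTensor,
      ← LinearMap.rTensor_comp_lTensor, LinearMap.comp_apply, hz,
      ← LinearMap.rTensor_comp_apply, hfg.linearMap_comp_eq_zero,
      LinearMap.rTensor_zero, LinearMap.zero_apply]
  obtain ⟨w, hw⟩ := (rTensor_exact (LinearMap.ker φ) hfg hg _).mp h2
  have h3 : f.rTensor P ((LinearMap.ker φ).subtype.lTensor K w) = f.rTensor P y := by
    rw [← LinearMap.comp_apply, LinearMap.rTensor_comp_lTensor,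
      ← LinearMap.lTensor_comp_rTensor, LinearMap.comp_apply, hw, hz]
  have h4 : (LinearMap.ker φ).subtype.lTensor K w = y :=
    Module.Flat.rTensor_preserves_injective_linearMap (M := P) f hf h3
  have h5 : φ ∘ₗ (LinearMap.ker φ).subtype = 0 := by ext ⟨a, ha⟩; exact ha
  rw [← hy, ← h4, ← LinearMap.lTensor_comp_apply, h5, LinearMap.lTensor_zero,
    LinearMap.zero_apply]

/-- If `0 → K → F → Q → 0` is exact and `Q` is flat, then for any `M`,
`K ⊗ M → F ⊗ M` is injective (i.e. `Tor₁(Q, M) = 0`). -/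
private lemma lemA {R : Type u} [CommRing R] {K F Q : Type u}
    [AddCommGroup K] [AddCommGroup F] [AddCommGroup Q]
    [Module R K] [Module R F] [Module R Q] [Module.Flat R Q]
    {f : K →ₗ[R] F} {g : F →ₗ[R] Q} (hf : Function.Injective f)
    (hfg : Function.Exact f g) (hg : Function.Surjective g)
    (M : Type u) [AddCommGroup M] [Module R M] :
    Function.Injective (f.rTensor M) :=
  lemA' hf hfg hg (Finsupp.linearCombination R _root_.id)
    (Finsupp.linearCombination_id_surjective R M)

set_option maxHeartbeats 1000000 in
set_option synthInstance.maxHeartbeats 400000 in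
/-- Let `A` be a commutative ring, `S` a commutative `A`-algebra that is
flat as an `A`-module, `t ∈ S` a nonzerodivisor such that `S/tS` is flat as an `A`-module,
and `I ⊆ S` an ideal such that `S/I` is flat as an `A`-module.  Then:
(a) for every `A`-module `M`, multiplication by `t` on `I ⊗[A] M` is injective; and
(b) the `A`-module `I/tI` is flat over `A`. -/
theorem stmt5 (A : Type u) (S : Type u) [CommRing A] [CommRing S] [Algebra A S]
    [Module.Flat A S]
    (t : S) (ht : t ∈ nonZeroDivisors S)
    [Module.Flat A (S ⧸ Ideal.span {t})]
    (I : Ideal S) [Module.Flat A (S ⧸ I)] :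
    (∀ (M : Type u) [AddCommGroup M] [Module A M],
        Function.Injective
          (LinearMap.rTensor M ((LinearMap.lsmul S I t).restrictScalars A))) ∧
      Module.Flat A
        (↥I ⧸ LinearMap.range ((LinearMap.lsmul S I t).restrictScalars A)) := by
  set τI : ↥I →ₗ[A] ↥I := (LinearMap.lsmul S I t).restrictScalars A with hτI
  set j : ↥I →ₗ[A] S := (I.subtype).restrictScalars A with hj
  have hj_inj : Function.Injective j := Submodule.injective_subtype I
  -- exactness `I → S → S/I`
  have hexactI : Function.Exact j ((I.mkQ).restrictScalars A) :=
    LinearMap.exact_subtype_mkQ I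
  have hsurjI : Function.Surjective ((I.mkQ).restrictScalars A) :=
    Submodule.mkQ_surjective I
  -- multiplication by `t` on `S`
  set τS : S →ₗ[A] S := (LinearMap.lsmul S S t).restrictScalars A with hτS
  have hτS_inj : Function.Injective τS := by
    intro a b hab
    exact (mul_cancel_left_mem_nonZeroDivisors ht).mp hab
  have hexactT : Function.Exact τS (((Ideal.span {t}).mkQ).restrictScalars A) := by
    intro y
    constructor
    · intro h
      have : y ∈ Ideal.span {t} := by
        rwa [LinearMap.restrictScalars_apply, Submodule.mkQ_apply,
          Submodule.Quotient.mk_eq_zero] at h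
      obtain ⟨c, hc⟩ := Ideal.mem_span_singleton'.mp this
      exact ⟨c, by simpa [hτS, mul_comm] using hc⟩
    · rintro ⟨x, rfl⟩
      rw [LinearMap.restrictScalars_apply, Submodule.mkQ_apply,
        Submodule.Quotient.mk_eq_zero]
      exact Ideal.mem_span_singleton'.mpr ⟨x, by simp [hτS, mul_comm]⟩
  have hsurjT : Function.Surjective (((Ideal.span {t}).mkQ).restrictScalars A) :=
    Submodule.mkQ_surjective (Ideal.span {t} : Ideal S)
  -- injectivity of `J ⊗ M → S ⊗ M` for all `M` (flatness of `S/I`)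
  have hjM : ∀ (M : Type u) [AddCommGroup M] [Module A M],
      Function.Injective (j.rTensor M) := fun M _ _ =>
    lemA hj_inj hexactI hsurjI M
  -- injectivity of `t` on `S ⊗ M` for all `M` (flatness of `S/tS`)
  have htM : ∀ (M : Type u) [AddCommGroup M] [Module A M],
      Function.Injective (τS.rTensor M) := fun M _ _ =>
    lemA hτS_inj hexactT hsurjT M
  -- naturality: `j ∘ τI = τS ∘ j`
  have hnat : j ∘ₗ τI = τS ∘ₗ j := by
    ext x
    simp [hτI, hτS, hj, smul_eq_mul]
  -- part (a)
  have partA : ∀ (M : Type u) [AddCommGroup M] [Module A M],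
      Function.Injective (τI.rTensor M) := by
    intro M _ _
    have hcomp : Function.Injective ((j ∘ₗ τI).rTensor M) := by
      rw [hnat, LinearMap.rTensor_comp, LinearMap.coe_comp]
      exact (htM M).comp (hjM M)
    rw [LinearMap.rTensor_comp, LinearMap.coe_comp] at hcomp
    exact hcomp.of_comp
  -- `I` is flat over `A`
  have hIflat : Module.Flat A ↥I := by
    rw [Module.Flat.iff_rTensor_injective']
    intro J
    have h1 : Function.Injective (LinearMap.rTensor S J.subtype) :=
      (Module.Flat.iff_rTensor_injective' (R := A) (M := S)).mp ‹_› J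
    have h2 : Function.Injective (j.lTensor ↥J) :=
      (j.lTensor_inj_iff_rTensor_inj ↥J).mpr (hjM ↥J)
    have key : (j.lTensor A) ∘ₗ (LinearMap.rTensor ↥I J.subtype) =
        (LinearMap.rTensor S J.subtype) ∘ₗ (j.lTensor ↥J) := by
      rw [LinearMap.lTensor_comp_rTensor, LinearMap.rTensor_comp_lTensor]
    have hcomp : Function.Injective
        ((j.lTensor A) ∘ₗ (LinearMap.rTensor ↥I J.subtype)) := by
      rw [key, LinearMap.coe_comp]
      exact h1.comp h2
    rw [LinearMap.coe_comp] at hcomp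
    exact hcomp.of_comp
  refine ⟨partA, ?_⟩
  -- part (b)
  rw [Module.Flat.iff_rTensor_injective']
  intro J
  set Qt := ↥I ⧸ LinearMap.range τI with hQt
  set π : ↥I →ₗ[A] Qt := (LinearMap.range τI).mkQ with hπ
  set u : ↥J →ₗ[A] A := J.subtype with hu
  rw [injective_iff_map_eq_zero]
  intro x hx
  obtain ⟨y, hy⟩ := LinearMap.lTensor_surjective ↥J (Submodule.mkQ_surjective _) x
  have h1 : π.lTensor A (u.rTensor ↥I y) = 0 := by
    rw [← LinearMap.comp_apply, LinearMap.lTensor_comp_rTensor,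
      ← LinearMap.rTensor_comp_lTensor, LinearMap.comp_apply, hy, hx]
  obtain ⟨z, hz⟩ :=
    (lTensor_exact (R := A) (M := ↥I) (N := ↥I) (P := Qt) (f := τI)
      (g := (LinearMap.range τI).mkQ) A (LinearMap.exact_map_mkQ_range τI) (Submodule.mkQ_surjective _) _).mp h1
  have h2 : (J.mkQ).rTensor ↥I z = 0 := by
    have hinj : Function.Injective (τI.lTensor (A ⧸ J)) :=
      (τI.lTensor_inj_iff_rTensor_inj (A ⧸ J)).mpr (partA (A ⧸ J))
    apply hinj
    have hzero : (J.mkQ) ∘ₗ u = 0 := by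
      ext ⟨a, ha⟩
      simpa [hu] using (Submodule.Quotient.mk_eq_zero J).mpr ha
    rw [map_zero, ← LinearMap.comp_apply, LinearMap.lTensor_comp_rTensor,
      ← LinearMap.rTensor_comp_lTensor, LinearMap.comp_apply, hz,
      ← LinearMap.rTensor_comp_apply, hzero, LinearMap.rTensor_zero,
      LinearMap.zero_apply]
  obtain ⟨w, hw⟩ :=
    (rTensor_exact (R := A) (M := ↥J) (N := A) (P := A ⧸ J) (f := J.subtype)
      (g := J.mkQ) ↥I (LinearMap.exact_subtype_mkQ J) (Submodule.mkQ_surjective J) _).mp h2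
  have h3 : u.rTensor ↥I (τI.lTensor ↥J w) = u.rTensor ↥I y := by
    rw [← LinearMap.comp_apply, LinearMap.rTensor_comp_lTensor,
      ← LinearMap.lTensor_comp_rTensor, LinearMap.comp_apply, hw, hz]
  have h4 : τI.lTensor ↥J w = y :=
    (Module.Flat.iff_rTensor_injective' (R := A) (M := ↥I)).mp hIflat J h3
  have h5 : π ∘ₗ τI = 0 := by
    ext x
    simp only [LinearMap.comp_apply, LinearMap.zero_apply, hπ, Submodule.mkQ_apply]
    exact (Submodule.Quotient.mk_eq_zero _).mpr (LinearMap.mem_range_self τI x)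
  rw [← hy, ← h4, ← LinearMap.lTensor_comp_apply, h5, LinearMap.lTensor_zero,
    LinearMap.zero_apply]
end

section
/- Let A' be a commutative Artinian local ring with maximal ideal m and residue field κ; let J ⊆ A' be an ideal with m·J = 0 (hence J² = 0); and let A = A'/J. Let R' be a commutative A'-algebra that is flat as an A'-module; set R = R'/JR' and R_κ = R' ⊗_{A'} κ. Let v₁, …, vₙ ∈ R' be elements whose images in R form a regular sequence and whose images in R_κ form a regular sequence. Then v₁, …, vₙ is a regular sequence in R', and R'/(v₁, …, vₙ) is a flat A'-module. -/
open TensorProduct LinearMap Submodule Function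
open scoped Pointwise

section Aux

variable {A : Type*} [CommRing A] {M : Type*} [AddCommGroup M] [Module A M]

lemma tmul_eq_zero_of_torsion {T : Type*} [AddCommGroup T] [Module A T] (m : Ideal A)
    (hT : ∀ a ∈ m, ∀ t : T, a • t = 0) {z : M} (hz : z ∈ (m • ⊤ : Submodule A M)) :
    ∀ t : T, (t ⊗ₜ[A] z : T ⊗[A] M) = 0 := by
  refine Submodule.smul_induction_on hz (fun a ha y _ t => ?_) (fun y z hy hz t => ?_)
  · rw [← TensorProduct.smul_tmul, hT a ha t, TensorProduct.zero_tmul]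
  · rw [TensorProduct.tmul_add, hy t, hz t, add_zero]

lemma lTensor_mkQ_injective' (m : Ideal A) {T : Type*} [AddCommGroup T] [Module A T]
    (hT : ∀ a ∈ m, ∀ t : T, a • t = 0) :
    Injective (lTensor T (m • ⊤ : Submodule A M).mkQ) := by
  rw [injective_iff_map_eq_zero]
  intro u hu
  obtain ⟨w, rfl⟩ := (lTensor_exact T (LinearMap.exact_subtype_mkQ
      (m • ⊤ : Submodule A M)) (Submodule.mkQ_surjective _) u).mp hu
  have hzero : lTensor T ((m • ⊤ : Submodule A M).subtype) = 0 :=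
    TensorProduct.ext' fun t s => by
      simpa using tmul_eq_zero_of_torsion m hT s.2 t
  rw [hzero, LinearMap.zero_apply]

end Aux

section Kappa

variable {A : Type*} [CommRing A] {M : Type*} [AddCommGroup M] [Module A M]

lemma injective_lTensor_of_torsion (m : Ideal A) [m.IsMaximal]
    {T : Type*} [AddCommGroup T] [Module A T]
    (hT : ∀ a ∈ m, ∀ t : T, a • t = 0)
    (f : M →ₗ[A] M)
    (hf : ∀ y : M, f y ∈ (m • ⊤ : Submodule A M) → y ∈ (m • ⊤ : Submodule A M)) :
    Injective (lTensor T f) := by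
  classical
  set q := (m • ⊤ : Submodule A M).mkQ with hq
  set fbar := Submodule.mapQ _ _ f (Submodule.smul_top_le_comap_smul_top m f) with hfb
  have hcomm : fbar ∘ₗ q = q ∘ₗ f := by
    refine LinearMap.ext fun z => ?_
    simp [hq, hfb, Submodule.mapQ_apply]
  have hYtor : ∀ a ∈ m, ∀ y : (M ⧸ (m • ⊤ : Submodule A M)), a • y = 0 := by
    intro a ha y
    obtain ⟨z, rfl⟩ := Submodule.mkQ_surjective _ y
    rw [show a • (m • ⊤ : Submodule A M).mkQ z = Submodule.Quotient.mk (a • z) from rfl,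
      Submodule.Quotient.mk_eq_zero]
    exact Submodule.smul_mem_smul ha Submodule.mem_top
  have hfbar_inj : Injective fbar := by
    rw [injective_iff_map_eq_zero]
    intro u hu
    obtain ⟨z, rfl⟩ := Submodule.mkQ_surjective _ u
    rw [Submodule.mkQ_apply, Submodule.mapQ_apply, Submodule.Quotient.mk_eq_zero] at hu
    rw [Submodule.mkQ_apply, Submodule.Quotient.mk_eq_zero]
    exact hf z hu
  have htorT : Module.IsTorsionBySet A T (m : Set A) := fun x a => hT a.1 a.2 x
  have htorY : Module.IsTorsionBySet A (M ⧸ (m • ⊤ : Submodule A M)) (m : Set A) :=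
    fun x a => hYtor a.1 a.2 x
  letI iT : Module (A ⧸ m) T := htorT.module
  letI iY : Module (A ⧸ m) (M ⧸ (m • ⊤ : Submodule A M)) := htorY.module
  letI : IsScalarTower A (A ⧸ m) T := htorT.isScalarTower
  letI : IsScalarTower A (A ⧸ m) (M ⧸ (m • ⊤ : Submodule A M)) := htorY.isScalarTower
  letI : Field (A ⧸ m) := Ideal.Quotient.field m
  have hsurj : Surjective (algebraMap A (A ⧸ m)) := by
    rw [Ideal.Quotient.algebraMap_eq]; exact Ideal.Quotient.mk_surjective
  let fκ := fbar.extendScalarsOfSurjective hsurj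
  have hker : LinearMap.ker fκ = ⊥ := by
    rw [LinearMap.ker_eq_bot]
    exact fun a b hab => hfbar_inj hab
  obtain ⟨r, hr⟩ := fκ.exists_leftInverse_of_injective hker
  let rA := r.restrictScalars A
  have hrA : rA ∘ₗ fbar = LinearMap.id := by
    refine LinearMap.ext fun y => ?_
    show r (fκ y) = y
    rw [← LinearMap.comp_apply, hr, LinearMap.id_apply]
  have hinv : ∀ w : T ⊗[A] (M ⧸ (m • ⊤ : Submodule A M)),
      lTensor T rA (lTensor T fbar w) = w := by
    intro w
    rw [← LinearMap.comp_apply, ← lTensor_comp, hrA, lTensor_id, LinearMap.id_apply]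
  have hinj_fbar : Injective (lTensor T fbar) := by
    intro u v huv
    rw [← hinv u, ← hinv v, huv]
  have hinj_q : Injective (lTensor T q) := lTensor_mkQ_injective' m hT
  have hcomm2 : (lTensor T fbar) ∘ₗ (lTensor T q) = (lTensor T q) ∘ₗ (lTensor T f) := by
    rw [← lTensor_comp, ← lTensor_comp, hcomm]
  intro u v huv
  apply hinj_q
  apply hinj_fbar
  have h1 := LinearMap.congr_fun hcomm2 u
  have h2 := LinearMap.congr_fun hcomm2 v
  simp only [LinearMap.comp_apply] at h1 h2
  rw [h1, h2, huv]

end Kappa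

section Devissage

variable {A : Type*} [CommRing A] {M : Type*} [AddCommGroup M] [Module A M]

lemma devissage (m : Ideal A) [m.IsMaximal] [Module.Flat A M]
    (f : M →ₗ[A] M)
    (hf : ∀ y : M, f y ∈ (m • ⊤ : Submodule A M) → y ∈ (m • ⊤ : Submodule A M)) :
    ∀ (i : ℕ) (T : Type u_dev) [AddCommGroup T] [Module A T],
      (m ^ i) • (⊤ : Submodule A T) = ⊥ → Injective (lTensor T f) := by
  intro i
  induction i with
  | zero =>
    intro T _ _ hT
    rw [pow_zero, Ideal.one_eq_top, Submodule.top_smul] at hT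
    haveI : Subsingleton T := by
      constructor
      intro a b
      have ha : a ∈ (⊥ : Submodule A T) := hT ▸ Submodule.mem_top
      have hb : b ∈ (⊥ : Submodule A T) := hT ▸ Submodule.mem_top
      rw [Submodule.mem_bot] at ha hb
      rw [ha, hb]
    intro u v _
    exact Subsingleton.elim u v
  | succ i ih =>
    intro T _ _ hT
    set T' := (m • ⊤ : Submodule A T) with hT'def
    have hsmul_zero : ∀ a ∈ m ^ i, ∀ z ∈ T', a • z = (0 : T) := by
      intro a ha z hz
      refine Submodule.smul_induction_on hz (fun b hb y _ => ?_) (fun y z h1 h2 => ?_)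
      · rw [smul_smul]
        have hab : a * b ∈ m ^ (i + 1) := by
          rw [pow_succ]; exact Ideal.mul_mem_mul ha hb
        have : (a * b) • y ∈ (m ^ (i + 1) • ⊤ : Submodule A T) :=
          Submodule.smul_mem_smul hab Submodule.mem_top
        rwa [hT, Submodule.mem_bot] at this
      · rw [smul_add, h1, h2, add_zero]
    have hT' : (m ^ i) • (⊤ : Submodule A T') = ⊥ := by
      rw [eq_bot_iff]
      refine Submodule.smul_le.mpr ?_
      intro a ha s _
      rw [Submodule.mem_bot]
      exact Subtype.ext (hsmul_zero a ha s.1 s.2)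
    have hTtor : ∀ a ∈ m, ∀ t : T ⧸ T', a • t = 0 := by
      intro a ha t
      obtain ⟨z, rfl⟩ := Submodule.mkQ_surjective _ t
      rw [show a • T'.mkQ z = Submodule.Quotient.mk (a • z) from rfl,
        Submodule.Quotient.mk_eq_zero]
      exact Submodule.smul_mem_smul ha Submodule.mem_top
    rw [injective_iff_map_eq_zero]
    intro u hu
    have comm1 : (rTensor M T'.mkQ) ∘ₗ (lTensor T f) =
        (lTensor (T ⧸ T') f) ∘ₗ (rTensor M T'.mkQ) :=
      TensorProduct.ext' fun t y => by simp
    have h1 : lTensor (T ⧸ T') f (rTensor M T'.mkQ u) = 0 := by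
      have := LinearMap.congr_fun comm1 u
      simp only [LinearMap.comp_apply] at this
      rw [← this, hu, map_zero]
    have h2 : rTensor M T'.mkQ u = 0 :=
      (injective_iff_map_eq_zero _).mp
        (injective_lTensor_of_torsion m hTtor f hf) _ h1
    obtain ⟨w, hw⟩ := (rTensor_exact M (LinearMap.exact_subtype_mkQ T')
      (Submodule.mkQ_surjective T') u).mp h2
    have comm2 : (rTensor M T'.subtype) ∘ₗ (lTensor T' f) =
        (lTensor T f) ∘ₗ (rTensor M T'.subtype) :=
      TensorProduct.ext' fun t y => by simp
    have h3 : rTensor M T'.subtype (lTensor T' f w) = 0 := by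
      have := LinearMap.congr_fun comm2 w
      simp only [LinearMap.comp_apply] at this
      rw [this, hw, hu]
    have hsub_inj : Injective (rTensor M T'.subtype) :=
      Module.Flat.rTensor_preserves_injective_linearMap _ (Submodule.injective_subtype T')
    have h4 : lTensor T' f w = 0 := hsub_inj (by rw [h3, map_zero])
    have h5 : w = 0 := (injective_iff_map_eq_zero _).mp (ih T' hT') w h4
    rw [← hw, h5, map_zero]

lemma injective_of_flat_devissage (m : Ideal A) [m.IsMaximal] [Module.Flat A M]
    (k : ℕ) (hm : m ^ k = ⊥)
    (f : M →ₗ[A] M)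
    (hf : ∀ y : M, f y ∈ (m • ⊤ : Submodule A M) → y ∈ (m • ⊤ : Submodule A M)) :
    Injective f := by
  have h := devissage m f hf k A (by rw [hm, Submodule.bot_smul])
  intro y z hyz
  have h1 : lTensor A f ((1 : A) ⊗ₜ[A] y) = lTensor A f ((1 : A) ⊗ₜ[A] z) := by
    simp [hyz]
  have h2 := h h1
  have := congrArg (TensorProduct.lid A M) h2
  simpa using this

lemma smul_top_devissage (m : Ideal A) [m.IsMaximal] [Module.Flat A M]
    (k : ℕ) (hm : m ^ k = ⊥)
    (f : M →ₗ[A] M)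
    (hf : ∀ y : M, f y ∈ (m • ⊤ : Submodule A M) → y ∈ (m • ⊤ : Submodule A M))
    (I : Ideal A) :
    ∀ y : M, f y ∈ (I • ⊤ : Submodule A M) → y ∈ (I • ⊤ : Submodule A M) := by
  have hinj : Injective (lTensor (A ⧸ I) f) :=
    devissage m f hf k (A ⧸ I) (by rw [hm, Submodule.bot_smul])
  set e := quotTensorEquivQuotSMul M I with he
  set fI := Submodule.mapQ _ _ f (Submodule.smul_top_le_comap_smul_top I f) with hfI
  have hcomm : fI ∘ₗ (e : (A ⧸ I) ⊗[A] M →ₗ[A] M ⧸ (I • ⊤ : Submodule A M)) =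
      (e : (A ⧸ I) ⊗[A] M →ₗ[A] M ⧸ (I • ⊤ : Submodule A M)) ∘ₗ lTensor (A ⧸ I) f := by
    refine TensorProduct.ext' fun t y => ?_
    obtain ⟨a, rfl⟩ := Ideal.Quotient.mk_surjective t
    simp [he, hfI, quotTensorEquivQuotSMul_mk_tmul, Submodule.mapQ_apply, map_smul]
  have hfI_inj : Injective fI := by
    intro u v huv
    have hu := LinearMap.congr_fun hcomm (e.symm u)
    have hv := LinearMap.congr_fun hcomm (e.symm v)
    simp only [LinearMap.comp_apply, LinearEquiv.coe_coe, LinearEquiv.apply_symm_apply] at hu hv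
    rw [hu, hv] at huv
    have := hinj (e.injective huv)
    exact e.symm.injective this
  intro y hy
  have h0 : fI (Submodule.Quotient.mk y) = 0 := by
    rw [hfI, Submodule.mapQ_apply, Submodule.Quotient.mk_eq_zero]
    exact hy
  have h1 : fI (Submodule.Quotient.mk y) = fI 0 := by rw [h0, map_zero]
  have := hfI_inj h1
  rwa [← Submodule.Quotient.mk_eq_zero]

end Devissage

section FlatQuot

variable {A : Type*} [CommRing A] {M : Type*} [AddCommGroup M] [Module A M]

lemma flat_quotient_devissage (m : Ideal A) [m.IsMaximal] [Module.Flat A M]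
    (k : ℕ) (hm : m ^ k = ⊥)
    (f : M →ₗ[A] M)
    (hf : ∀ y : M, f y ∈ (m • ⊤ : Submodule A M) → y ∈ (m • ⊤ : Submodule A M))
    {Q : Type*} [AddCommGroup Q] [Module A Q]
    (p : M →ₗ[A] Q) (hp : Surjective p) (hexact : Exact f p) :
    Module.Flat A Q := by
  rw [Module.Flat.iff_rTensor_injective']
  intro I
  set ψM : I ⊗[A] M →ₗ[A] M := TensorProduct.lift ((LinearMap.lsmul A M) ∘ₗ I.subtype) with hψMdef
  set ψQ : I ⊗[A] Q →ₗ[A] Q := TensorProduct.lift ((LinearMap.lsmul A Q) ∘ₗ I.subtype) with hψQdef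
  have hψM : (TensorProduct.lid A M).toLinearMap ∘ₗ (rTensor M I.subtype) = ψM :=
    TensorProduct.ext' fun i y => by simp [hψMdef]
  have hψQ : (TensorProduct.lid A Q).toLinearMap ∘ₗ (rTensor Q I.subtype) = ψQ :=
    TensorProduct.ext' fun i y => by simp [hψQdef]
  have hrM_inj : Injective (rTensor M I.subtype) :=
    Module.Flat.iff_rTensor_injective'.mp inferInstance I
  have hψM_inj : Injective ψM := by
    intro a b hab
    apply hrM_inj
    apply (TensorProduct.lid A M).injective
    have ha := LinearMap.congr_fun hψM a
    have hb := LinearMap.congr_fun hψM b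
    simp only [LinearMap.comp_apply, LinearEquiv.coe_coe] at ha hb
    rw [ha, hb, hab]
  suffices hinj : Injective ψQ by
    intro a b hab
    apply hinj
    have ha := LinearMap.congr_fun hψQ a
    have hb := LinearMap.congr_fun hψQ b
    simp only [LinearMap.comp_apply, LinearEquiv.coe_coe] at ha hb
    rw [← ha, ← hb, hab]
  rw [injective_iff_map_eq_zero]
  intro t ht
  obtain ⟨s, rfl⟩ := lTensor_surjective I hp t
  have comm1 : ψQ ∘ₗ (lTensor I p) = p ∘ₗ ψM :=
    TensorProduct.ext' fun i y => by simp [hψMdef, hψQdef]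
  have h1 : p (ψM s) = 0 := by
    have := LinearMap.congr_fun comm1 s
    simp only [LinearMap.comp_apply] at this
    rw [← this, ht]
  obtain ⟨m₀, hm₀⟩ := (hexact (ψM s)).mp h1
  have hmem : ∀ s' : I ⊗[A] M, ψM s' ∈ (I • ⊤ : Submodule A M) := by
    intro s'
    induction s' using TensorProduct.induction_on with
    | zero => simpa using zero_mem _
    | tmul i y => simpa [hψMdef] using Submodule.smul_mem_smul i.2 Submodule.mem_top
    | add a b ha hb => rw [map_add]; exact add_mem ha hb
  have hm₀mem : m₀ ∈ (I • ⊤ : Submodule A M) :=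
    smul_top_devissage m k hm f hf I m₀ (by rw [hm₀]; exact hmem s)
  have hsurj_onto : ∀ z ∈ (I • ⊤ : Submodule A M), ∃ s', ψM s' = z := by
    intro z hz
    refine Submodule.smul_induction_on hz (fun a ha y _ => ⟨(⟨a, ha⟩ : I) ⊗ₜ[A] y, by simp [hψMdef]⟩) ?_
    rintro y z ⟨sy, hsy⟩ ⟨sz, hsz⟩
    exact ⟨sy + sz, by rw [map_add, hsy, hsz]⟩
  obtain ⟨s₀, hs₀⟩ := hsurj_onto m₀ hm₀mem
  have comm2 : ψM ∘ₗ (lTensor I f) = f ∘ₗ ψM :=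
    TensorProduct.ext' fun i y => by simp [hψMdef]
  have hzero : ψM (s - lTensor I f s₀) = 0 := by
    have := LinearMap.congr_fun comm2 s₀
    simp only [LinearMap.comp_apply] at this
    rw [map_sub, this, hs₀, hm₀, sub_self]
  have hs : s = lTensor I f s₀ := by
    exact sub_eq_zero.mp (hψM_inj (show ψM (s - lTensor I f s₀) = ψM 0 by rw [hzero, map_zero]))
  have hpf : p ∘ₗ f = 0 := LinearMap.ext fun z => (hexact (f z)).mpr ⟨z, rfl⟩
  rw [hs, ← LinearMap.comp_apply, ← lTensor_comp, hpf, lTensor_zero, LinearMap.zero_apply]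

end FlatQuot

section Seq

open RingTheory.Sequence

variable {A : Type*} [CommRing A] {R : Type*} [CommRing R] [Algebra A R]

lemma mem_map_smul_top_iff (I : Ideal A) {M : Type*} [AddCommGroup M] [Module R M]
    [Module A M] [IsScalarTower A R M] (z : M) :
    z ∈ (Ideal.map (algebraMap A R) I • ⊤ : Submodule R M) ↔
      z ∈ (I • ⊤ : Submodule A M) := by
  constructor
  · intro hz
    refine Submodule.smul_induction_on hz (fun r hr y _ => ?_) (fun a b ha hb => add_mem ha hb)
    have hr' : r ∈ Ideal.span ((algebraMap A R) '' (I : Set A)) := hr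
    have key : ∀ y : M, r • y ∈ (I • ⊤ : Submodule A M) := by
      refine Submodule.span_induction
        (p := fun r _ => ∀ y : M, r • y ∈ (I • ⊤ : Submodule A M)) ?_ ?_ ?_ ?_ hr'
      · rintro _ ⟨a, ha, rfl⟩ y
        rw [algebraMap_smul]
        exact Submodule.smul_mem_smul ha Submodule.mem_top
      · intro y; rw [zero_smul]; exact zero_mem _
      · intro r1 r2 _ _ h1 h2 y
        rw [add_smul]; exact add_mem (h1 y) (h2 y)
      · intro c r' _ h y
        rw [smul_eq_mul, mul_comm, mul_smul]
        exact h (c • y)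
    exact key y
  · intro hz
    refine Submodule.smul_induction_on hz (fun a ha y _ => ?_) (fun a b ha hb => add_mem ha hb)
    rw [← algebraMap_smul R a y]
    exact Submodule.smul_mem_smul (Ideal.mem_map_of_mem _ ha) Submodule.mem_top

lemma seq_aux (m : Ideal A) [m.IsMaximal] (k : ℕ) (hm : m ^ k = ⊥) (vs : List R) :
    ∀ (M : Type u_seq) [AddCommGroup M] [Module R M] [Module A M] [IsScalarTower A R M]
      [Module.Flat A M],
      IsWeaklyRegular (M ⧸ (Ideal.map (algebraMap A R) m • ⊤ : Submodule R M)) vs →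
      IsWeaklyRegular M vs ∧
        Module.Flat A (M ⧸ (Ideal.ofList vs • ⊤ : Submodule R M)) := by
  induction vs with
  | nil =>
    intro M _ _ _ _ _ _
    refine ⟨IsWeaklyRegular.nil R M, ?_⟩
    have e : (M ⧸ (Ideal.ofList ([] : List R) • ⊤ : Submodule R M)) ≃ₗ[R] M :=
      Submodule.quotEquivOfEqBot _ (by rw [Ideal.ofList_nil, Submodule.bot_smul])
    exact (Module.Flat.equiv_iff (e.restrictScalars A)).mpr inferInstance
  | cons x vs ih =>
    intro M _ _ _ _ _ h
    rw [isWeaklyRegular_cons_iff] at h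
    obtain ⟨h1, h2⟩ := h
    set Jm := Ideal.map (algebraMap A R) m with hJm
    set f : M →ₗ[A] M := (LinearMap.lsmul R M x).restrictScalars A with hfdef
    have hfapp : ∀ y : M, f y = x • y := fun y => rfl
    have hf : ∀ y : M, f y ∈ (m • ⊤ : Submodule A M) → y ∈ (m • ⊤ : Submodule A M) := by
      intro y hy
      have hxy : x • (Submodule.Quotient.mk y : M ⧸ (Jm • ⊤ : Submodule R M)) = 0 := by
        rw [← Submodule.Quotient.mk_smul, Submodule.Quotient.mk_eq_zero]
        exact (mem_map_smul_top_iff m (x • y)).mpr hy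
      have h0 : (Submodule.Quotient.mk y : M ⧸ (Jm • ⊤ : Submodule R M)) = 0 := by
        apply h1
        show x • _ = x • (0 : M ⧸ (Jm • ⊤ : Submodule R M))
        rw [hxy, smul_zero]
      rw [Submodule.Quotient.mk_eq_zero] at h0
      exact (mem_map_smul_top_iff m y).mp h0
    have hregM : IsSMulRegular M x := by
      intro a b hab
      exact injective_of_flat_devissage m k hm f hf hab
    set p : M →ₗ[A] (QuotSMulTop x M) := ((x • ⊤ : Submodule R M).mkQ).restrictScalars A
      with hpdef
    have hp_surj : Surjective p := Submodule.mkQ_surjective (x • ⊤ : Submodule R M)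
    have hexact : Exact f p := by
      intro z
      constructor
      · intro hz
        have hz' : z ∈ (x • ⊤ : Submodule R M) := by
          rwa [show p z = Submodule.Quotient.mk z from rfl,
            Submodule.Quotient.mk_eq_zero] at hz
        rw [← SetLike.mem_coe, Submodule.coe_pointwise_smul] at hz'
        obtain ⟨w, -, hw⟩ := Set.mem_smul_set.mp hz'
        exact ⟨w, hw⟩
      · rintro ⟨w, rfl⟩
        rw [show p (f w) = Submodule.Quotient.mk (x • w) from rfl,
          Submodule.Quotient.mk_eq_zero]
        exact Submodule.smul_mem_pointwise_smul w x ⊤ Submodule.mem_top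
    haveI hflatQ : Module.Flat A (QuotSMulTop x M) :=
      flat_quotient_devissage m k hm f hf p hp_surj hexact
    have e2 : QuotSMulTop x (M ⧸ (Jm • ⊤ : Submodule R M)) ≃ₗ[R]
        ((QuotSMulTop x M) ⧸ (Jm • ⊤ : Submodule R (QuotSMulTop x M))) :=
      (Submodule.quotEquivOfEq _ _
          (show (x • ⊤ : Submodule R (M ⧸ (Jm • ⊤ : Submodule R M))) =
              Submodule.map (Jm • ⊤ : Submodule R M).mkQ (x • ⊤ : Submodule R M) from by
            rw [Submodule.map_pointwise_smul, Submodule.map_top, Submodule.range_mkQ])) ≪≫ₗ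
        (Submodule.quotientQuotientEquivQuotientSup (Jm • ⊤) (x • ⊤)) ≪≫ₗ
        (Submodule.quotEquivOfEq _ _ (sup_comm _ _)) ≪≫ₗ
        (Submodule.quotientQuotientEquivQuotientSup (x • ⊤) (Jm • ⊤)).symm ≪≫ₗ
        (Submodule.quotEquivOfEq _ _
          (show Submodule.map (x • ⊤ : Submodule R M).mkQ (Jm • ⊤ : Submodule R M) =
              (Jm • ⊤ : Submodule R (QuotSMulTop x M)) from by
            rw [Submodule.map_smul'', Submodule.map_top, Submodule.range_mkQ]))
    have h2' := (e2.isWeaklyRegular_congr vs).mp h2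
    obtain ⟨hw_vs, hflat_vs⟩ := ih (QuotSMulTop x M) h2'
    refine ⟨(isWeaklyRegular_cons_iff M x vs).mpr ⟨hregM, hw_vs⟩, ?_⟩
    have e3 := Submodule.quotOfListConsSMulTopEquivQuotSMulTopInner M x vs
    exact (Module.Flat.equiv_iff (e3.restrictScalars A)).mpr hflat_vs

end Seq

/-- Let `A'` be a commutative Artinian local ring with maximal ideal `m`
and residue field `κ`; let `J ⊆ A'` be an ideal with `m·J = 0`; and let `A = A'/J`.  Let
`R'` be a commutative `A'`-algebra that is flat as an `A'`-module; set `R = R'/JR'` and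
`R_κ = R' ⊗[A'] κ = R'/mR'`.  Let `v₁, …, vₙ ∈ R'` be elements whose images in `R` form a
regular sequence and whose images in `R_κ` form a regular sequence.  Then `v₁, …, vₙ` is a
regular sequence in `R'`, and `R'/(v₁, …, vₙ)` is a flat `A'`-module. -/
theorem stmt7 (A' : Type*) [CommRing A'] [IsArtinianRing A'] [IsLocalRing A']
    (J : Ideal A') (hJ : IsLocalRing.maximalIdeal A' * J = ⊥)
    (R' : Type*) [CommRing R'] [Algebra A' R'] [Module.Flat A' R']
    (n : ℕ) (v : Fin n → R')
    (hR : RingTheory.Sequence.IsRegular (R' ⧸ Ideal.map (algebraMap A' R') J)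
      (List.ofFn fun i => Ideal.Quotient.mk (Ideal.map (algebraMap A' R') J) (v i)))
    (hκ : RingTheory.Sequence.IsRegular
      (R' ⧸ Ideal.map (algebraMap A' R') (IsLocalRing.maximalIdeal A'))
      (List.ofFn fun i =>
        Ideal.Quotient.mk (Ideal.map (algebraMap A' R') (IsLocalRing.maximalIdeal A')) (v i))) :
    RingTheory.Sequence.IsRegular R' (List.ofFn v) ∧
      Module.Flat A' (R' ⧸ Ideal.span (Set.range v)) := by
  classical
  set m := IsLocalRing.maximalIdeal A' with hmdef
  -- nilpotency of the maximal ideal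
  obtain ⟨k, hk⟩ : IsNilpotent m := by
    rw [hmdef, ← IsLocalRing.jacobson_eq_maximalIdeal (⊥ : Ideal A') bot_ne_top]
    exact IsArtinianRing.isNilpotent_jacobson_bot
  set Jm := Ideal.map (algebraMap A' R') m with hJmdef
  -- transfer the weakly regular hypothesis to R' ⧸ Jm as an R'-module
  have hlist : (List.ofFn fun i => Ideal.Quotient.mk Jm (v i)) =
      List.map (algebraMap R' (R' ⧸ Jm)) (List.ofFn v) := by
    rw [List.map_ofFn, Ideal.Quotient.algebraMap_eq]
    rfl
  have hw0 : RingTheory.Sequence.IsWeaklyRegular (R' ⧸ Jm) (List.ofFn v) := by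
    have h := hκ.toIsWeaklyRegular
    rw [hlist] at h
    exact (RingTheory.Sequence.isWeaklyRegular_map_algebraMap_iff
      (R' ⧸ Jm) _ (List.ofFn v)).mp h
  have e0 : (R' ⧸ Jm) ≃ₗ[R'] (R' ⧸ (Jm • ⊤ : Submodule R' R')) :=
    Submodule.quotEquivOfEq _ _ (show (Jm : Submodule R' R') = Jm • ⊤ by
      rw [smul_eq_mul, Ideal.mul_top])
  have hw1 := (e0.isWeaklyRegular_congr (List.ofFn v)).mp hw0
  obtain ⟨hwreg, hflat⟩ := seq_aux m k hk (List.ofFn v) R' hw1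
  -- properness
  have hne : (⊤ : Submodule R' R') ≠ Ideal.ofList (List.ofFn v) • ⊤ := by
    intro hcontra
    apply hκ.top_ne_smul
    rw [smul_eq_mul, Ideal.mul_top] at hcontra
    have h1 : Ideal.ofList (List.ofFn v) = (⊤ : Ideal R') := hcontra.symm
    have h2 := congrArg (Ideal.map (Ideal.Quotient.mk Jm)) h1
    rw [Ideal.map_ofList, Ideal.map_top] at h2
    rw [show List.map (Ideal.Quotient.mk Jm) (List.ofFn v) =
        (List.ofFn fun i => Ideal.Quotient.mk Jm (v i)) from by
      rw [List.map_ofFn]; rfl] at h2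
    rw [h2, smul_eq_mul, Ideal.top_mul]
  -- final flatness conversion
  have heq : (Ideal.ofList (List.ofFn v) • ⊤ : Submodule R' R') = Ideal.span (Set.range v) := by
    rw [smul_eq_mul, Ideal.mul_top]
    have : {r : R' | r ∈ List.ofFn v} = Set.range v := by
      ext a
      simp only [Set.mem_setOf_eq, List.mem_ofFn, Set.mem_range]
    show Ideal.span {r : R' | r ∈ List.ofFn v} = _
    rw [this]
  have e4 : (R' ⧸ (Ideal.ofList (List.ofFn v) • ⊤ : Submodule R' R')) ≃ₗ[R']
      (R' ⧸ Ideal.span (Set.range v)) := Submodule.quotEquivOfEq _ _ heq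
  exact ⟨⟨hwreg, hne⟩, (Module.Flat.equiv_iff (e4.restrictScalars A')).mp hflat⟩
end

section
/- Let R be a commutative ring, J ⊆ R an ideal, and t ∈ R an element whose image in R/J is a nonzerodivisor. Then J ∩ tR = tJ, and the natural ring homomorphism R/(tJ) → (R/J) ×_{R/(J + tR)} (R/tR), induced by the two quotient maps, is an isomorphism onto the fiber product. -/
/-- Let `R` be a commutative ring, `J ⊆ R` an ideal, and `t ∈ R` an
element whose image in `R/J` is a nonzerodivisor.  Then `J ∩ tR = tJ`, and the natural
ring homomorphism `R/(tJ) → (R/J) ×_{R/(J + tR)} (R/tR)` induced by the two quotient maps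
is an isomorphism onto the fiber product, i.e. it is injective with image exactly the
pairs having the same image in `R/(J + tR)`. -/
theorem stmt9 (R : Type*) [CommRing R] (J : Ideal R) (t : R)
    (ht : Ideal.Quotient.mk J t ∈ nonZeroDivisors (R ⧸ J)) :
    J ⊓ Ideal.span {t} = Ideal.span {t} * J ∧
    ∃ f : R ⧸ (Ideal.span {t} * J) →+* (R ⧸ J) × (R ⧸ Ideal.span {t}),
      (∀ r : R, f (Ideal.Quotient.mk (Ideal.span {t} * J) r) =
        (Ideal.Quotient.mk J r, Ideal.Quotient.mk (Ideal.span {t}) r)) ∧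
      Function.Injective f ∧
      ∀ x : (R ⧸ J) × (R ⧸ Ideal.span {t}),
        x ∈ Set.range f ↔
          Ideal.Quotient.factor (S := J) (T := J ⊔ Ideal.span {t}) le_sup_left x.1 =
            Ideal.Quotient.factor (S := Ideal.span {t}) (T := J ⊔ Ideal.span {t}) le_sup_right x.2 := by
  have hcap : J ⊓ Ideal.span {t} = Ideal.span {t} * J := by
    apply le_antisymm
    · rintro x hx
      rw [Ideal.mem_inf] at hx
      obtain ⟨hxJ, hxt⟩ := hx
      rw [Ideal.mem_span_singleton] at hxt
      obtain ⟨r, rfl⟩ := hxt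
      have h0 : Ideal.Quotient.mk J r * Ideal.Quotient.mk J t = 0 := by
        rw [← map_mul, mul_comm, Ideal.Quotient.eq_zero_iff_mem]
        exact hxJ
      have hr : r ∈ J := by
        rw [← Ideal.Quotient.eq_zero_iff_mem]
        exact ht.2 _ h0
      exact Ideal.mul_mem_mul (Ideal.mem_span_singleton_self t) hr
    · exact le_trans Ideal.mul_le_inf (by rw [inf_comm])
  refine ⟨hcap, ?_⟩
  set g : R →+* (R ⧸ J) × (R ⧸ Ideal.span {t}) :=
    (Ideal.Quotient.mk J).prod (Ideal.Quotient.mk (Ideal.span {t})) with hg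
  have hker : ∀ a ∈ Ideal.span {t} * J, g a = 0 := by
    intro a ha
    rw [← hcap, Ideal.mem_inf] at ha
    have : g a = (Ideal.Quotient.mk J a, Ideal.Quotient.mk (Ideal.span {t}) a) := rfl
    rw [this, Prod.mk_eq_zero, Ideal.Quotient.eq_zero_iff_mem, Ideal.Quotient.eq_zero_iff_mem]
    exact ha
  set f := Ideal.Quotient.lift (Ideal.span {t} * J) g hker with hf
  have hfmk : ∀ r : R, f (Ideal.Quotient.mk (Ideal.span {t} * J) r) =
      (Ideal.Quotient.mk J r, Ideal.Quotient.mk (Ideal.span {t}) r) := fun r => rfl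
  refine ⟨f, hfmk, ?_, ?_⟩
  · rw [injective_iff_map_eq_zero]
    intro a ha
    obtain ⟨r, rfl⟩ := Ideal.Quotient.mk_surjective a
    rw [hfmk, Prod.mk_eq_zero, Ideal.Quotient.eq_zero_iff_mem,
      Ideal.Quotient.eq_zero_iff_mem] at ha
    rw [Ideal.Quotient.eq_zero_iff_mem, ← hcap, Ideal.mem_inf]
    exact ha
  · intro x
    constructor
    · rintro ⟨a, rfl⟩
      obtain ⟨r, rfl⟩ := Ideal.Quotient.mk_surjective a
      rw [hfmk]
      simp [Ideal.Quotient.factor_mk]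
    · intro hx
      obtain ⟨a, ha⟩ := Ideal.Quotient.mk_surjective x.1
      obtain ⟨b, hb⟩ := Ideal.Quotient.mk_surjective x.2
      rw [← ha, ← hb, Ideal.Quotient.factor_mk, Ideal.Quotient.factor_mk,
        Ideal.Quotient.eq] at hx
      obtain ⟨j, hj, s, hs, hjs⟩ := Submodule.mem_sup.mp hx
      refine ⟨Ideal.Quotient.mk _ (a - j), ?_⟩
      rw [hfmk]
      ext
      · show Ideal.Quotient.mk J (a - j) = x.1
        rw [← ha, Ideal.Quotient.eq]
        simpa using J.neg_mem hj
      · show Ideal.Quotient.mk (Ideal.span {t}) (a - j) = x.2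
        rw [← hb, Ideal.Quotient.eq]
        have : a - j - b = s := by linear_combination -hjs
        rwa [this]
end
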